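/- The 2×2 matrix a over Z/2Z with rows (0,1) and (1,1) has a Drazin inverse but has no Hirano inverse. -/

import Mathlib

def IsHiranoInverse {R : Type*} [Ring R] (a b : R) : Prop :=
  IsNilpotent (a ^ 2 - a * b) ∧ a * b = b * a ∧ b = b * a * b

def IsDrazinInverse {R : Type*} [Ring R] (a b : R) : Prop :=
  IsNilpotent (a - a ^ 2 * b) ∧ a * b = b * a ∧ b = b * a * b

/-- Abstract core: if `a³ = 1` and `b` is a Hirano inverse of `a`,
then `a² - 1` is nilpotent. -/
lemma hirano_aux {R : Type*} [Ring R] (a b : R) (ha3 : a * a * a = 1)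
    (hn : IsNilpotent (a ^ 2 - a * b)) (hc : a * b = b * a) (hb : b = b * a * b) :
    IsNilpotent (a ^ 2 - 1) := by
  have hidem : (a * b) * (a * b) = a * b := by
    calc (a * b) * (a * b) = a * (b * a * b) := by rw [mul_assoc, mul_assoc]
      _ = a * b := by rw [← hb]
  have hea : (a * b) * a = a * (a * b) := by
    rw [mul_assoc, ← hc]
  have hde : (1 - a * b) * (a * b) = 0 := by
    rw [sub_mul, one_mul, hidem, sub_self]
  have hcae : Commute a (a * b) := by
    unfold Commute SemiconjBy; exact hea.symm
  have hcomm : Commute (a ^ 2 - a * b) (1 - a * b) := by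
    have h1 : Commute (a ^ 2 - a * b) (a * b) :=
      Commute.sub_left (hcae.pow_left 2) (Commute.refl _)
    exact Commute.sub_right (Commute.one_right _) h1
  have hnil : IsNilpotent ((1 - a * b) * a ^ 2) := by
    have : (1 - a * b) * (a ^ 2 - a * b) = (1 - a * b) * a ^ 2 := by
      rw [mul_sub, hde, sub_zero]
    rw [← this]
    exact hcomm.symm.isNilpotent_mul_left hn
  -- 1 - a*b is idempotent and (1 - a*b) * a² is nilpotent with a a unit, so 1 - a*b = 0
  have hdidem : (1 - a * b) * (1 - a * b) = (1 - a * b) := by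
    rw [mul_sub, mul_one, hde, sub_zero]
  have hdpow : ∀ m : ℕ, (1 - a * b) ^ (m + 1) = 1 - a * b := by
    intro m; induction m with
    | zero => simp
    | succ m ih => rw [pow_succ, ih, hdidem]
  have hcda : Commute (1 - a * b) (a ^ 2) :=
    Commute.sub_left (Commute.one_left _) ((hcae.symm).pow_right 2)
  obtain ⟨k, hk⟩ := hnil
  have hd0 : 1 - a * b = 0 := by
    rcases Nat.eq_zero_or_pos k with h0 | hpos
    · subst h0; simp at hk
      rw [← mul_one (1 - a * b), hk, mul_zero]
    · obtain ⟨m, rfl⟩ := Nat.exists_eq_add_of_lt hpos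
      rw [hcda.mul_pow, Nat.zero_add, hdpow m] at hk
      have hu : IsUnit a := ⟨⟨a, a * a, by rw [← mul_assoc]; exact ha3, ha3⟩, rfl⟩
      have hum : IsUnit ((a ^ 2) ^ (m + 1)) := (hu.pow 2).pow _
      obtain ⟨u, hu'⟩ := hum
      calc (1 : R) - a * b
          = (1 - a * b) * ((a ^ 2) ^ (m + 1) * (↑u⁻¹ : Rˣ)) := by
            rw [← hu', Units.mul_inv, mul_one]
        _ = 0 := by rw [← mul_assoc, hk, zero_mul]
  have he1 : a * b = 1 := by
    have := sub_eq_zero.mp hd0; exact this.symm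
  rwa [he1] at hn

theorem stmt3 :
    (∃ b, IsDrazinInverse (!![0, 1; 1, 1] : Matrix (Fin 2) (Fin 2) (ZMod 2)) b) ∧
    ¬ (∃ b, IsHiranoInverse (!![0, 1; 1, 1] : Matrix (Fin 2) (Fin 2) (ZMod 2)) b) := by
  have hab : (!![0, 1; 1, 1] : Matrix (Fin 2) (Fin 2) (ZMod 2)) * !![1, 1; 1, 0] = 1 := by
    rw [Matrix.mul_fin_two, Matrix.one_fin_two]; decide
  have hba : (!![1, 1; 1, 0] : Matrix (Fin 2) (Fin 2) (ZMod 2)) * !![0, 1; 1, 1] = 1 := by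
    rw [Matrix.mul_fin_two, Matrix.one_fin_two]; decide
  have hsq : (!![0, 1; 1, 1] : Matrix (Fin 2) (Fin 2) (ZMod 2)) * !![0, 1; 1, 1]
      = !![1, 1; 1, 0] := by
    rw [Matrix.mul_fin_two]; decide
  have ha3 : (!![0, 1; 1, 1] : Matrix (Fin 2) (Fin 2) (ZMod 2)) * !![0, 1; 1, 1]
      * !![0, 1; 1, 1] = 1 := by
    rw [hsq, hba]
  constructor
  · refine ⟨!![1, 1; 1, 0], ⟨1, ?_⟩, ?_, ?_⟩
    · rw [pow_one, pow_two, mul_assoc, hab, mul_one, sub_self]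
    · rw [hab, hba]
    · rw [hba, one_mul]
  · rintro ⟨b, hn, hc, hb⟩
    have key := hirano_aux _ b ha3 hn hc hb
    have heq : (!![0, 1; 1, 1] : Matrix (Fin 2) (Fin 2) (ZMod 2)) ^ 2 - 1
        = !![0, 1; 1, 1] := by
      rw [pow_two, hsq, Matrix.one_fin_two]
      decide
    rw [heq] at key
    obtain ⟨k, hk⟩ := key
    have h10 : (1 : Matrix (Fin 2) (Fin 2) (ZMod 2)) = 0 := by
      calc (1 : Matrix (Fin 2) (Fin 2) (ZMod 2)) = 1 ^ k := (one_pow k).symm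
        _ = ((!![0, 1; 1, 1] : Matrix (Fin 2) (Fin 2) (ZMod 2)) ^ 3) ^ k := by
            rw [show (!![0, 1; 1, 1] : Matrix (Fin 2) (Fin 2) (ZMod 2)) ^ 3
              = !![0, 1; 1, 1] * !![0, 1; 1, 1] * !![0, 1; 1, 1] by
                rw [pow_succ, pow_succ, pow_one], ha3]
        _ = ((!![0, 1; 1, 1] : Matrix (Fin 2) (Fin 2) (ZMod 2)) ^ k) ^ 3 := by
            rw [← pow_mul, ← pow_mul, Nat.mul_comm]
        _ = 0 := by rw [hk]; simp
    exact one_ne_zero h10
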